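/- Let α < 0, a ∈ (0, +∞), and let L̆ : (0, +∞) → ℝ be a function such that t ↦ L̆(t)/t is locally integrable on (0, +∞), satisfying 0 ≤ L̆(x) < +∞ for all x > 0, lim_{x→0⁺} ∫_x^a L̆(t)/t dt = +∞ and lim_{x→+∞} ∫_a^x L̆(t)/t dt = +∞. For k > 0 set F_k(x) = [1 − kα exp(−∫_a^x L̆(t)/t dt)]^{1/α} on (0, +∞). Then at every point x > 0 at which L̆ is continuous, F_k is differentiable with derivative f_k(x) ≥ 0, and the α-generalized reversed aging intensity of F_k equals L̆ there: α x F_k(x)^{α−1} f_k(x)/(1 − F_k(x)^α) = L̆(x). -/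

import Mathlib

/-- The candidate cdf built from a prescribed reversed aging intensity `L` for `α < 0`:
`F_k(x) = [1 - k α exp(-∫_a^x L(t)/t dt)]^(1/α)`. -/
noncomputable def Fneg (α a k : ℝ) (L : ℝ → ℝ) (x : ℝ) : ℝ :=
  (1 - k * α * Real.exp (-∫ t in a..x, L t / t)) ^ (1/α)

/-- For `α < 0` and `L̆` as in the construction of `F_k`, at every point `x > 0`
at which `L̆` is continuous, `F_k` is differentiable with nonnegative derivative
`f_k(x)`, and the α-generalized reversed aging intensity of `F_k` equals `L̆` there:
`α x F_k(x)^(α-1) f_k(x) / (1 - F_k(x)^α) = L̆(x)`. -/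
theorem stmt_3 (α : ℝ) (hα : α < 0) (a : ℝ) (ha : 0 < a) (L : ℝ → ℝ)
    (hLi : MeasureTheory.LocallyIntegrableOn (fun t => L t / t) (Set.Ioi 0)
      MeasureTheory.volume)
    (hL0 : ∀ x > (0:ℝ), 0 ≤ L x)
    (h2 : Filter.Tendsto (fun x => ∫ t in x..a, L t / t)
      (nhdsWithin (0:ℝ) (Set.Ioi 0)) Filter.atTop)
    (h3 : Filter.Tendsto (fun x => ∫ t in a..x, L t / t) Filter.atTop Filter.atTop)
    (k : ℝ) (hk : 0 < k)
    (x : ℝ) (hx : 0 < x) (hc : ContinuousWithinAt L (Set.Ioi 0) x) :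
    ∃ d : ℝ, HasDerivAt (Fneg α a k L) d x ∧ 0 ≤ d ∧
      α * x * Fneg α a k L x ^ (α - 1) * d / (1 - Fneg α a k L x ^ α) = L x := by
  have hα0 : α ≠ 0 := hα.ne
  have hx0 : x ≠ 0 := hx.ne'
  -- continuity of the integrand at x
  have hcx : ContinuousAt L x := by
    have : Set.Ioi (0:ℝ) ∈ nhds x := Ioi_mem_nhds hx
    exact hc.continuousAt this
  have hcf : ContinuousAt (fun t => L t / t) x := hcx.div continuousAt_id hx0
  -- interval integrability
  have hsub : Set.uIcc a x ⊆ Set.Ioi (0:ℝ) := by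
    intro y hy
    rw [Set.mem_uIcc] at hy
    rcases hy with ⟨h1, _⟩ | ⟨h1, _⟩ <;> simp only [Set.mem_Ioi] <;> linarith
  have hint : IntervalIntegrable (fun t => L t / t) MeasureTheory.volume a x :=
    (hLi.integrableOn_compact_subset hsub isCompact_uIcc).intervalIntegrable
  have hsub2 : Set.Icc (x/2) (x+1) ⊆ Set.Ioi (0:ℝ) := by
    intro y hy
    simp only [Set.mem_Ioi]
    have := hy.1
    linarith
  have hmeas : StronglyMeasurableAtFilter (fun t => L t / t) (nhds x)
      MeasureTheory.volume := by
    refine ⟨Set.Icc (x/2) (x+1), Icc_mem_nhds (by linarith) (by linarith), ?_⟩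
    exact (hLi.integrableOn_compact_subset hsub2 isCompact_Icc).aestronglyMeasurable
  -- derivative of the integral
  have hG : HasDerivAt (fun y => ∫ t in a..y, L t / t) (L x / x) x :=
    intervalIntegral.integral_hasDerivAt_right hint hmeas hcf
  set G : ℝ := ∫ t in a..x, L t / t with hGdef
  set E : ℝ := Real.exp (-G) with hEdef
  have hEpos : 0 < E := Real.exp_pos _
  set u : ℝ := 1 - k * α * E with hudef
  have hkαE : k * α * E < 0 := mul_neg_of_neg_of_pos (mul_neg_of_pos_of_neg hk hα) hEpos
  have hu1 : 1 < u := by simp only [hudef]; linarith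
  have hu0 : (0:ℝ) < u := by linarith
  have hE : HasDerivAt (fun y => Real.exp (-∫ t in a..y, L t / t)) (Real.exp (-G) * (-(L x / x))) x := hG.neg.exp
  have hu : HasDerivAt (fun y => 1 - k * α * Real.exp (-∫ t in a..y, L t / t))
      (-(k * α * (Real.exp (-G) * (-(L x / x))))) x := (hE.const_mul (k * α)).const_sub 1
  have hune : u ≠ 0 := hu0.ne'
  have hF : HasDerivAt (Fneg α a k L)
      ((-(k * α * (Real.exp (-G) * (-(L x / x))))) * (1/α) * u ^ (1/α - 1)) x := by
    have := hu.rpow_const (p := 1/α) (Or.inl hune)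
    exact this
  set d : ℝ := (-(k * α * (Real.exp (-G) * (-(L x / x))))) * (1/α) * u ^ (1/α - 1) with hddef
  have hdeq : d = k * E * (L x / x) * u ^ (1/α - 1) := by
    simp only [hddef, hEdef]
    field_simp
  have hd0 : 0 ≤ d := by
    rw [hdeq]
    have h1 : 0 ≤ L x / x := div_nonneg (hL0 x hx) hx.le
    positivity
  refine ⟨d, hF, hd0, ?_⟩
  have hFx : Fneg α a k L x = u ^ (1/α) := rfl
  have hpow2 : (u ^ (1/α)) ^ α = u := by
    rw [← Real.rpow_mul hu0.le, one_div, inv_mul_cancel₀ hα0, Real.rpow_one]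
  have hpow1 : (u ^ (1/α)) ^ (α - 1) = u ^ ((1/α) * (α - 1)) :=
    (Real.rpow_mul hu0.le _ _).symm
  have hAB : u ^ ((1/α) * (α - 1)) * u ^ (1/α - 1) = 1 := by
    rw [← Real.rpow_add hu0, show (1/α) * (α - 1) + (1/α - 1) = 0 by field_simp; ring,
      Real.rpow_zero]
  rw [hFx, hpow2, hpow1, hdeq]
  have h1u : 1 - u = k * α * E := by rw [hudef]; ring
  rw [h1u, div_eq_iff hkαE.ne]
  have hre : α * x * u ^ ((1/α) * (α - 1)) * (k * E * (L x / x) * u ^ (1/α - 1)) =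
      α * x * (L x / x) * k * E * (u ^ ((1/α) * (α - 1)) * u ^ (1/α - 1)) := by ring
  rw [hre, hAB]
  field_simp
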